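/- arXiv:1608.00120 — 5 statements merged into one kernel-verified Lean document; each statement's English description precedes it below -/
import Mathlib

section
/- Let X be a nonnegative real-valued random variable, let θ ≥ 0 and δ > 0. Then E[(1+X)^{−θ}] ≤ U_{δ,X}(θ), where U_{δ,X}(θ) = inf over natural numbers N of { (1+δN)^{−θ} + Σ_{k=1}^{N} a_{θ,δ}(k)·F_X(kδ) } and a_{θ,δ}(k) = (1+(k−1)δ)^{−θ} − (1+kδ)^{−θ}. (This is Lemma 1 of the paper, with the minimization over u ≥ 0 and N_δ(u) = ⌊u/δ⌋ rewritten as an infimum over natural numbers N.) -/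
open MeasureTheory ProbabilityTheory Finset

/-- The upper bound `U_{δ,X}(θ)` of Lemma 1 of the paper, expressed in terms of the
c.d.f. `F` of the random variable: the infimum over the number of discretization
steps `N : ℕ` of `(1+δN)^{-θ} + ∑_{k=1}^{N} a_{θ,δ}(k) · F(kδ)`, where
`a_{θ,δ}(k) = (1+(k-1)δ)^{-θ} - (1+kδ)^{-θ}`. -/
noncomputable def Ubound (F : ℝ → ℝ) (δ θ : ℝ) : ℝ :=
  ⨅ N : ℕ,
    ((1 + δ * N) ^ (-θ) +
      ∑ k ∈ Icc 1 N,
        ((1 + ((k : ℝ) - 1) * δ) ^ (-θ) - (1 + (k : ℝ) * δ) ^ (-θ)) * F ((k : ℝ) * δ))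

/-- Pointwise bound: discretizing `x ↦ (1+x)^{-θ}` on the grid `kδ` gives an upper
bound. -/
lemma pointwise_bound (θ δ : ℝ) (hθ : 0 ≤ θ) (hδ : 0 < δ) (x : ℝ) (hx : 0 ≤ x) (N : ℕ) :
    (1 + x) ^ (-θ) ≤ (1 + δ * N) ^ (-θ) +
      ∑ k ∈ Icc 1 N,
        ((1 + ((k : ℝ) - 1) * δ) ^ (-θ) - (1 + (k : ℝ) * δ) ^ (-θ)) *
          (if x ≤ (k : ℝ) * δ then (1 : ℝ) else 0) := by
  induction N with
  | zero =>
      simp only [Nat.cast_zero, mul_zero, add_zero, Icc_self, Icc_eq_empty_of_lt,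
        sum_empty]
      rw [Real.one_rpow]
      simpa using Real.rpow_le_one_of_one_le_of_nonpos (by linarith) (by linarith)
  | succ N ih =>
      by_cases hxN : x ≤ ((N : ℝ) + 1) * δ
      · rw [sum_Icc_succ_top (by omega)]
        have hind : (if x ≤ ((N + 1 : ℕ) : ℝ) * δ then (1:ℝ) else 0) = 1 := by
          rw [if_pos]; push_cast; linarith
        have e1 : (1:ℝ) + (((N + 1 : ℕ) : ℝ) - 1) * δ = 1 + δ * N := by push_cast; ring
        have e2 : (1:ℝ) + ((N + 1 : ℕ) : ℝ) * δ = 1 + δ * ((N + 1 : ℕ) : ℝ) := by ring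
        rw [hind, e1, e2, mul_one]
        linarith [ih]
      · push_neg at hxN
        have hsum : ∑ k ∈ Icc 1 (N+1),
            ((1 + ((k : ℝ) - 1) * δ) ^ (-θ) - (1 + (k : ℝ) * δ) ^ (-θ)) *
              (if x ≤ (k : ℝ) * δ then (1:ℝ) else 0) = 0 := by
          apply sum_eq_zero
          intro k hk
          rw [if_neg, mul_zero]
          push_neg
          have hk' : (k : ℝ) ≤ (N : ℝ) + 1 := by
            exact_mod_cast (mem_Icc.mp hk).2
          calc (k : ℝ) * δ ≤ ((N : ℝ) + 1) * δ := by nlinarith [hδ.le]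
            _ < x := hxN
        rw [hsum, add_zero]
        apply Real.rpow_le_rpow_of_nonpos
        · positivity
        · push_cast; nlinarith [hδ.le]
        · linarith

/-- Lemma 1 of the paper. For a nonnegative random variable `X`,
`θ ≥ 0` and `δ > 0`, `E[(1+X)^{-θ}] ≤ U_{δ,X}(θ)`. -/
theorem inverse_moment_le_Ubound
    {Ω : Type*} [MeasureSpace Ω] [IsProbabilityMeasure (ℙ : Measure Ω)]
    (X : Ω → ℝ) (hXmeas : Measurable X) (hXnonneg : ∀ ω, 0 ≤ X ω)
    (θ δ : ℝ) (hθ : 0 ≤ θ) (hδ : 0 < δ) :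
    ∫ ω : Ω, (1 + X ω) ^ (-θ) ∂ℙ ≤
      Ubound (fun x => (ℙ {ω : Ω | X ω ≤ x}).toReal) δ θ := by
  apply le_ciInf
  intro N
  -- the auxiliary step functions
  set a : ℕ → ℝ := fun k => (1 + ((k : ℝ) - 1) * δ) ^ (-θ) - (1 + (k : ℝ) * δ) ^ (-θ)
    with ha
  have hsmeas : ∀ k : ℕ, MeasurableSet {ω : Ω | X ω ≤ (k : ℝ) * δ} := fun k =>
    hXmeas measurableSet_Iic
  have hint_ind : ∀ k : ℕ, Integrable
      (fun ω => a k * ({ω : Ω | X ω ≤ (k : ℝ) * δ}.indicator (fun _ => (1:ℝ)) ω)) ℙ := by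
    intro k
    exact ((integrable_const (1:ℝ)).indicator (hsmeas k)).const_mul _
  have hgint : Integrable (fun ω => (1 + δ * N) ^ (-θ) +
      ∑ k ∈ Icc 1 N, a k * ({ω : Ω | X ω ≤ (k : ℝ) * δ}.indicator (fun _ => (1:ℝ)) ω)) ℙ :=
    (integrable_const _).add (integrable_finset_sum _ fun k _ => hint_ind k)
  have hfint : Integrable (fun ω => (1 + X ω) ^ (-θ)) ℙ := by
    apply (integrable_const (1:ℝ)).mono'
    · exact (Measurable.aestronglyMeasurable (by fun_prop))
    · filter_upwards with ω
      rw [Real.norm_eq_abs, abs_of_nonneg (Real.rpow_nonneg (by linarith [hXnonneg ω]) _)]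
      exact Real.rpow_le_one_of_one_le_of_nonpos (by linarith [hXnonneg ω]) (by linarith)
  have hmono : ∫ ω : Ω, (1 + X ω) ^ (-θ) ∂ℙ ≤ ∫ ω : Ω, ((1 + δ * N) ^ (-θ) +
      ∑ k ∈ Icc 1 N, a k * ({ω : Ω | X ω ≤ (k : ℝ) * δ}.indicator (fun _ => (1:ℝ)) ω)) ∂ℙ := by
    apply integral_mono hfint hgint
    intro ω
    have := pointwise_bound θ δ hθ hδ (X ω) (hXnonneg ω) N
    simp only [Set.indicator_apply, Set.mem_setOf_eq]
    exact this
  refine hmono.trans_eq ?_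
  rw [integral_add (integrable_const _) (integrable_finset_sum _ fun k _ => hint_ind k),
    integral_const, integral_finset_sum _ fun k _ => hint_ind k]
  simp only [Measure.real, measure_univ, ENNReal.toReal_one, one_smul]
  congr 1
  apply sum_congr rfl
  intro k _
  rw [integral_const_mul, integral_indicator_const _ (hsmeas k), smul_eq_mul, mul_one]
  rfl
end

section
/- Let θ > 0, δ_b ≥ 0, and let p, q > 0 with p·q < 1. Suppose the bivariate random processes A and S on a common probability space satisfy E[e^{θ·A(u,t)}] ≤ e^{θ·δ_b}·p^{t−u} for all natural numbers 0 ≤ u ≤ t, and E[e^{−θ·S(u,s)}] ≤ q^{s−u} for all natural numbers 0 ≤ u ≤ s. Then for all natural numbers s, t: Σ_{u=0}^{min(s,t)} E[e^{θ·A(u,t)}]·E[e^{−θ·S(u,s)}] ≤ e^{θ·δ_b}·p^{max(t−s,0)}·q^{max(s−t,0)} / (1 − p·q). -/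
open MeasureTheory ProbabilityTheory Finset

lemma geom_sum_le_one_div {x : ℝ} (hx0 : 0 ≤ x) (hx1 : x < 1) (n : ℕ) :
    ∑ i ∈ range n, x ^ i ≤ 1 / (1 - x) := by
  have h : (0:ℝ) < 1 - x := by linarith
  rw [geom_sum_eq hx1.ne]
  have key : (x ^ n - 1) / (x - 1) = (1 - x ^ n) / (1 - x) := by
    rw [div_eq_div_iff (by linarith) (by linarith)]; ring
  rw [key]
  have hxn : 0 ≤ x ^ n := pow_nonneg hx0 n
  gcongr
  linarith

/-- the bound (17) in the proof of Theorem 2 of the paper. Under the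
`(σ(θ),ρ(θ))`-type envelopes `E[e^{θ A(u,t)}] ≤ e^{θ δ_b} p^{t-u}` and
`E[e^{-θ S(u,s)}] ≤ q^{s-u}`, with stability `p·q < 1`, for all `s, t`:
`∑_{u=0}^{min(s,t)} E[e^{θ A(u,t)}]·E[e^{-θ S(u,s)}]
  ≤ e^{θ δ_b} p^{max(t-s,0)} q^{max(s-t,0)} / (1-pq)`
(the exponents being natural-number subtractions). -/
theorem sum_MGF_product_bound
    {Ω : Type*} [MeasureSpace Ω] [IsProbabilityMeasure (ℙ : Measure Ω)]
    (θ δb p q : ℝ) (hθ : 0 < θ) (hδb : 0 ≤ δb) (hp : 0 < p) (hq : 0 < q)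
    (hpq : p * q < 1)
    (A S : ℕ → ℕ → Ω → ℝ)
    (hA : ∀ u t : ℕ, u ≤ t →
      ∫ ω : Ω, Real.exp (θ * A u t ω) ∂ℙ ≤ Real.exp (θ * δb) * p ^ (t - u))
    (hS : ∀ u s : ℕ, u ≤ s →
      ∫ ω : Ω, Real.exp (-θ * S u s ω) ∂ℙ ≤ q ^ (s - u))
    (s t : ℕ) :
    ∑ u ∈ range (min s t + 1),
        (∫ ω : Ω, Real.exp (θ * A u t ω) ∂ℙ) * (∫ ω : Ω, Real.exp (-θ * S u s ω) ∂ℙ) ≤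
      Real.exp (θ * δb) * p ^ (t - s) * q ^ (s - t) / (1 - p * q) := by
  set m := min s t with hm
  have hms : m ≤ s := min_le_left s t
  have hmt : m ≤ t := min_le_right s t
  have htm : t - m = t - s := by omega
  have hsm : s - m = s - t := by omega
  have step1 : ∑ u ∈ range (m + 1),
      (∫ ω : Ω, Real.exp (θ * A u t ω) ∂ℙ) * (∫ ω : Ω, Real.exp (-θ * S u s ω) ∂ℙ) ≤
      ∑ u ∈ range (m + 1),
        Real.exp (θ * δb) * p ^ (t - s) * q ^ (s - t) * (p * q) ^ (m - u) := by
    apply Finset.sum_le_sum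
    intro u hu
    have hu' : u ≤ m := Nat.lt_succ_iff.mp (mem_range.mp hu)
    have h1 := hA u t (hu'.trans hmt)
    have h2 := hS u s (hu'.trans hms)
    have hnn1 : (0:ℝ) ≤ ∫ ω : Ω, Real.exp (θ * A u t ω) ∂ℙ :=
      integral_nonneg fun ω => (Real.exp_pos _).le
    have hnn2 : (0:ℝ) ≤ ∫ ω : Ω, Real.exp (-θ * S u s ω) ∂ℙ :=
      integral_nonneg fun ω => (Real.exp_pos _).le
    calc (∫ ω : Ω, Real.exp (θ * A u t ω) ∂ℙ) * (∫ ω : Ω, Real.exp (-θ * S u s ω) ∂ℙ)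
        ≤ (Real.exp (θ * δb) * p ^ (t - u)) * (q ^ (s - u)) :=
          mul_le_mul h1 h2 hnn2 (by positivity)
      _ = Real.exp (θ * δb) * p ^ (t - s) * q ^ (s - t) * (p * q) ^ (m - u) := by
          have ht' : t - u = (t - s) + (m - u) := by omega
          have hs' : s - u = (s - t) + (m - u) := by omega
          rw [ht', hs', pow_add, pow_add, mul_pow]; ring
  have step2 : ∑ u ∈ range (m + 1), (p * q) ^ (m - u) = ∑ k ∈ range (m + 1), (p * q) ^ k := by
    rw [← Finset.sum_range_reflect (fun j => (p * q) ^ (m - j)) (m + 1)]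
    apply Finset.sum_congr rfl
    intro k hk
    have := mem_range.mp hk
    congr 1
    omega
  have hgeo : ∑ k ∈ range (m + 1), (p * q) ^ k ≤ 1 / (1 - p * q) :=
    geom_sum_le_one_div (by positivity) hpq _
  have hC : (0:ℝ) ≤ Real.exp (θ * δb) * p ^ (t - s) * q ^ (s - t) := by positivity
  calc ∑ u ∈ range (m + 1),
      (∫ ω : Ω, Real.exp (θ * A u t ω) ∂ℙ) * (∫ ω : Ω, Real.exp (-θ * S u s ω) ∂ℙ)
      ≤ ∑ u ∈ range (m + 1),
        Real.exp (θ * δb) * p ^ (t - s) * q ^ (s - t) * (p * q) ^ (m - u) := step1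
    _ = (Real.exp (θ * δb) * p ^ (t - s) * q ^ (s - t)) * ∑ u ∈ range (m + 1), (p * q) ^ (m - u) := by
        rw [Finset.mul_sum]
    _ ≤ (Real.exp (θ * δb) * p ^ (t - s) * q ^ (s - t)) * (1 / (1 - p * q)) := by
        rw [step2]; exact mul_le_mul_of_nonneg_left hgeo hC
    _ = Real.exp (θ * δb) * p ^ (t - s) * q ^ (s - t) / (1 - p * q) := by ring
end

section
/- Let a_i and s_i, i ∈ ℕ, be nonnegative random variables on a probability space, define A(τ,t) = Σ_{i=τ}^{t−1} a_i and S(τ,t) = Σ_{i=τ}^{t−1} s_i, and let D(0,t) satisfy the dynamic-server property D(0,t) ≥ min_{0≤τ≤t} ( A(0,τ) + S(τ,t) ). Let θ > 0, δ_b ≥ 0, and p, q > 0 with p·q < 1; assume that for each 0 ≤ u ≤ t the random variables A(u,t) and S(u,t) are independent, that E[e^{θ·A(u,t)}] ≤ e^{θ·δ_b}·p^{t−u} for all 0 ≤ u ≤ t, and that E[e^{−θ·S(u,t)}] ≤ q^{t−u} for all 0 ≤ u ≤ t. Then the backlog B(t) = A(0,t) − D(0,t) satisfies, for every real b, P( B(t)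 > b ) ≤ e^{θ(δ_b − b)} / (1 − p·q). -/
open MeasureTheory ProbabilityTheory Finset

/-- probabilistic backlog bound, cf. Theorem 2 of the paper. For a
dynamic server with cumulative arrivals `A(τ,t) = ∑_{i=τ}^{t-1} aᵢ`, service
`S(τ,t) = ∑_{i=τ}^{t-1} sᵢ`, independence of `A(u,t)` and `S(u,t)` for each `u ≤ t`,
envelopes `E[e^{θ A(u,t)}] ≤ e^{θ δ_b} p^{t-u}` and `E[e^{-θ S(u,t)}] ≤ q^{t-u}`, and
stability `p·q < 1`, the backlog `B(t) = A(0,t) - D(0,t)` satisfies, for every real `b`,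
`P(B(t) > b) ≤ e^{θ(δ_b - b)} / (1 - pq)`. -/
theorem backlog_violation_probability_bound
    {Ω : Type*} [MeasureSpace Ω] [IsProbabilityMeasure (ℙ : Measure Ω)]
    (a s : ℕ → Ω → ℝ)
    (hameas : ∀ i, Measurable (a i)) (hsmeas : ∀ i, Measurable (s i))
    (ha : ∀ i ω, 0 ≤ a i ω) (hs : ∀ i ω, 0 ≤ s i ω)
    (D : ℕ → Ω → ℝ)
    (hD : ∀ (t : ℕ) (ω : Ω),
      (range (t + 1)).inf' ⟨0, by simp⟩
          (fun τ => (∑ i ∈ Ico 0 τ, a i ω) + ∑ i ∈ Ico τ t, s i ω) ≤ D t ω)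
    (θ δb p q : ℝ) (hθ : 0 < θ) (hδb : 0 ≤ δb) (hp : 0 < p) (hq : 0 < q)
    (hpq : p * q < 1) (t : ℕ)
    (hindep : ∀ u : ℕ, u ≤ t →
      IndepFun (fun ω => ∑ i ∈ Ico u t, a i ω) (fun ω => ∑ i ∈ Ico u t, s i ω) ℙ)
    (hAint : ∀ u : ℕ, u ≤ t →
      Integrable (fun ω => Real.exp (θ * ∑ i ∈ Ico u t, a i ω)) ℙ)
    (hA : ∀ u : ℕ, u ≤ t →
      ∫ ω : Ω, Real.exp (θ * ∑ i ∈ Ico u t, a i ω) ∂ℙ ≤ Real.exp (θ * δb) * p ^ (t - u))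
    (hS : ∀ u : ℕ, u ≤ t →
      ∫ ω : Ω, Real.exp (-θ * ∑ i ∈ Ico u t, s i ω) ∂ℙ ≤ q ^ (t - u))
    (b : ℝ) :
    (ℙ {ω : Ω | b < (∑ i ∈ Ico 0 t, a i ω) - D t ω}).toReal ≤
      Real.exp (θ * (δb - b)) / (1 - p * q) := by
  classical
  set X : ℕ → Ω → ℝ := fun τ ω => ∑ i ∈ Ico τ t, a i ω with hX
  set Y : ℕ → Ω → ℝ := fun τ ω => ∑ i ∈ Ico τ t, s i ω with hY
  set Aset : ℕ → Set Ω := fun τ => {ω | b < X τ ω - Y τ ω} with hAset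
  -- event inclusion
  have hsub : {ω : Ω | b < (∑ i ∈ Ico 0 t, a i ω) - D t ω} ⊆
      ⋃ τ ∈ range (t + 1), Aset τ := by
    intro ω hω
    simp only [Set.mem_setOf_eq] at hω
    obtain ⟨τ, hτ, heq⟩ := Finset.exists_mem_eq_inf'
      (⟨0, by simp⟩ : (range (t + 1)).Nonempty)
      (fun τ => (∑ i ∈ Ico 0 τ, a i ω) + ∑ i ∈ Ico τ t, s i ω)
    have hτt : τ ≤ t := Nat.lt_succ_iff.mp (Finset.mem_range.mp hτ)
    have hDge := hD t ω
    rw [heq] at hDge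
    have hsplit : (∑ i ∈ Ico 0 τ, a i ω) + ∑ i ∈ Ico τ t, a i ω
        = ∑ i ∈ Ico 0 t, a i ω := Finset.sum_Ico_consecutive _ (Nat.zero_le τ) hτt
    refine Set.mem_biUnion hτ ?_
    simp only [hAset, hX, hY, Set.mem_setOf_eq]
    linarith
  have hunion : ℙ {ω : Ω | b < (∑ i ∈ Ico 0 t, a i ω) - D t ω}
      ≤ ∑ τ ∈ range (t + 1), ℙ (Aset τ) :=
    (measure_mono hsub).trans (measure_biUnion_finset_le _ _)
  -- Chernoff bound for each term
  have hterm : ∀ τ ∈ range (t + 1),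
      (ℙ (Aset τ)).toReal ≤ Real.exp (θ * (δb - b)) * (p * q) ^ (t - τ) := by
    intro τ hτmem
    have hτ : τ ≤ t := Nat.lt_succ_iff.mp (Finset.mem_range.mp hτmem)
    have hXm : Measurable (X τ) := Finset.measurable_sum _ fun i _ => hameas i
    have hYm : Measurable (Y τ) := Finset.measurable_sum _ fun i _ => hsmeas i
    have hYle1 : ∀ ω, Real.exp (-θ * Y τ ω) ≤ 1 := by
      intro ω
      rw [← Real.exp_zero]
      apply Real.exp_le_exp.mpr
      have : 0 ≤ Y τ ω := Finset.sum_nonneg fun i _ => hs i ω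
      nlinarith
    have hexpeq : ∀ ω, Real.exp (θ * (X τ ω - Y τ ω))
        = Real.exp (θ * X τ ω) * Real.exp (-θ * Y τ ω) := by
      intro ω; rw [← Real.exp_add]; ring_nf
    have hYint : Integrable (fun ω => Real.exp (-θ * Y τ ω)) ℙ := by
      refine Integrable.mono' (integrable_const 1)
        ((Real.measurable_exp.comp (hYm.const_mul (-θ))).aestronglyMeasurable) ?_
      filter_upwards with ω
      rw [Real.norm_eq_abs, abs_of_nonneg (Real.exp_nonneg _)]
      exact hYle1 ω
    have hZint : Integrable (fun ω => Real.exp (θ * (X τ ω - Y τ ω))) ℙ := by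
      refine Integrable.mono' (hAint τ hτ)
        ((Real.measurable_exp.comp ((hXm.sub hYm).const_mul θ)).aestronglyMeasurable) ?_
      filter_upwards with ω
      rw [Real.norm_eq_abs, abs_of_nonneg (Real.exp_nonneg _), hexpeq ω]
      calc Real.exp (θ * X τ ω) * Real.exp (-θ * Y τ ω)
          ≤ Real.exp (θ * X τ ω) * 1 :=
            mul_le_mul_of_nonneg_left (hYle1 ω) (Real.exp_nonneg _)
        _ = Real.exp (θ * X τ ω) := mul_one _
    -- Chernoff
    have hchernoff : (ℙ {ω | b ≤ X τ ω - Y τ ω}).toReal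
        ≤ Real.exp (-θ * b) * mgf (fun ω => X τ ω - Y τ ω) ℙ θ :=
      measure_ge_le_exp_mul_mgf b hθ.le hZint
    have hsubset : (ℙ (Aset τ)).toReal ≤ (ℙ {ω | b ≤ X τ ω - Y τ ω}).toReal := by
      apply ENNReal.toReal_mono (measure_ne_top _ _)
      refine measure_mono fun ω hω => ?_
      simp only [hAset, Set.mem_setOf_eq] at hω ⊢
      exact le_of_lt hω
    -- factor the mgf via independence
    have hindepExp : IndepFun (fun ω => Real.exp (θ * X τ ω))
        (fun ω => Real.exp (-θ * Y τ ω)) ℙ :=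
      (hindep τ hτ).comp (Real.measurable_exp.comp (measurable_const_mul θ))
        (Real.measurable_exp.comp (measurable_const_mul (-θ)))
    have hmgf : mgf (fun ω => X τ ω - Y τ ω) ℙ θ
        = (∫ ω, Real.exp (θ * X τ ω) ∂ℙ) * ∫ ω, Real.exp (-θ * Y τ ω) ∂ℙ := by
      unfold mgf
      calc ∫ ω, Real.exp (θ * (X τ ω - Y τ ω)) ∂ℙ
          = ∫ ω, Real.exp (θ * X τ ω) * Real.exp (-θ * Y τ ω) ∂ℙ := by
            exact integral_congr_ae (Filter.Eventually.of_forall hexpeq)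
        _ = _ := hindepExp.integral_fun_mul_eq_mul_integral (hAint τ hτ).aestronglyMeasurable hYint.aestronglyMeasurable
    have hApos : 0 ≤ ∫ ω, Real.exp (θ * X τ ω) ∂ℙ :=
      integral_nonneg fun ω => Real.exp_nonneg _
    have hSpos : 0 ≤ ∫ ω, Real.exp (-θ * Y τ ω) ∂ℙ :=
      integral_nonneg fun ω => Real.exp_nonneg _
    have hmgfle : mgf (fun ω => X τ ω - Y τ ω) ℙ θ
        ≤ (Real.exp (θ * δb) * p ^ (t - τ)) * q ^ (t - τ) := by
      rw [hmgf]
      have h1 := hA τ hτ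
      have h2 := hS τ hτ
      have hb1 : 0 ≤ Real.exp (θ * δb) * p ^ (t - τ) :=
        mul_nonneg (Real.exp_nonneg _) (pow_nonneg hp.le _)
      exact mul_le_mul h1 h2 hSpos hb1
    calc (ℙ (Aset τ)).toReal
        ≤ Real.exp (-θ * b) * mgf (fun ω => X τ ω - Y τ ω) ℙ θ :=
          hsubset.trans hchernoff
      _ ≤ Real.exp (-θ * b) * ((Real.exp (θ * δb) * p ^ (t - τ)) * q ^ (t - τ)) :=
          mul_le_mul_of_nonneg_left hmgfle (Real.exp_nonneg _)
      _ = Real.exp (θ * (δb - b)) * (p * q) ^ (t - τ) := by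
          have he : Real.exp (θ * (δb - b)) = Real.exp (-θ * b) * Real.exp (θ * δb) := by
            rw [← Real.exp_add]; ring_nf
          rw [he, mul_pow]; ring
  -- sum the bounds
  have hsumfin : ∑ τ ∈ range (t + 1), ℙ (Aset τ) ≠ ⊤ :=
    (ENNReal.sum_lt_top.mpr fun τ _ => measure_lt_top _ _).ne
  have h1 : (ℙ {ω : Ω | b < (∑ i ∈ Ico 0 t, a i ω) - D t ω}).toReal
      ≤ ∑ τ ∈ range (t + 1), (ℙ (Aset τ)).toReal := by
    rw [← ENNReal.toReal_sum fun τ _ => measure_ne_top _ _]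
    exact ENNReal.toReal_mono hsumfin hunion
  have h2 : ∑ τ ∈ range (t + 1), (ℙ (Aset τ)).toReal
      ≤ ∑ τ ∈ range (t + 1), Real.exp (θ * (δb - b)) * (p * q) ^ (t - τ) :=
    Finset.sum_le_sum hterm
  have h3 : ∑ τ ∈ range (t + 1), Real.exp (θ * (δb - b)) * (p * q) ^ (t - τ)
      = Real.exp (θ * (δb - b)) * ∑ k ∈ range (t + 1), (p * q) ^ k := by
    rw [← Finset.mul_sum]
    congr 1
    have := Finset.sum_range_reflect (fun k => (p * q) ^ k) (t + 1)
    simpa using this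
  have hgeom : ∑ k ∈ range (t + 1), (p * q) ^ k ≤ 1 / (1 - p * q) := by
    rw [geom_sum_eq (ne_of_lt hpq)]
    have h1pq : 0 < 1 - p * q := by linarith
    have hpow : 0 ≤ (p * q) ^ (t + 1) := by positivity
    have heq : ((p * q) ^ (t + 1) - 1) / (p * q - 1)
        = (1 - (p * q) ^ (t + 1)) / (1 - p * q) := by
      rw [← neg_div_neg_eq]; ring_nf
    rw [heq]
    gcongr
    linarith
  calc (ℙ {ω : Ω | b < (∑ i ∈ Ico 0 t, a i ω) - D t ω}).toReal
      ≤ Real.exp (θ * (δb - b)) * ∑ k ∈ range (t + 1), (p * q) ^ k := by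
        rw [← h3]; exact h1.trans h2
    _ ≤ Real.exp (θ * (δb - b)) * (1 / (1 - p * q)) :=
        mul_le_mul_of_nonneg_left hgeom (Real.exp_nonneg _)
    _ = Real.exp (θ * (δb - b)) / (1 - p * q) := by ring
end

section
/- Under the hypotheses of the probabilistic backlog bound (dynamic server, independence of A(u,t) and S(u,t) for each u, envelopes E[e^{θ·A(u,t)}] ≤ e^{θ·δ_b}·p^{t−u} and E[e^{−θ·S(u,t)}] ≤ q^{t−u}, and stability p·q < 1 with θ > 0, δ_b ≥ 0, p, q > 0), for any violation probability 0 < ε < 1, setting b^ε = δ_b + (1/θ)·( ln(1/ε) − ln(1 − p·q) ), the backlog B(t) = A(0,t) − D(0,t) satisfies P( B(t) > b^ε ) ≤ ε. (This is the backlog part of Theorem 2.) -/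
open MeasureTheory ProbabilityTheory Finset

/-- backlog part of Theorem 2 of the paper. Under the hypotheses of
the probabilistic backlog bound (dynamic server, independence of `A(u,t)` and `S(u,t)`
for each `u`, envelopes `E[e^{θ A(u,t)}] ≤ e^{θ δ_b} p^{t-u}` and
`E[e^{-θ S(u,t)}] ≤ q^{t-u}`, stability `p·q < 1`), for any violation probability
`0 < ε < 1`, setting `bᵉ = δ_b + (1/θ)(ln(1/ε) - ln(1-pq))`, the backlog
`B(t) = A(0,t) - D(0,t)` satisfies `P(B(t) > bᵉ) ≤ ε`. -/
theorem backlog_bound_of_violation_probability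
    {Ω : Type*} [MeasureSpace Ω] [IsProbabilityMeasure (ℙ : Measure Ω)]
    (a s : ℕ → Ω → ℝ)
    (hameas : ∀ i, Measurable (a i)) (hsmeas : ∀ i, Measurable (s i))
    (ha : ∀ i ω, 0 ≤ a i ω) (hs : ∀ i ω, 0 ≤ s i ω)
    (D : ℕ → Ω → ℝ)
    (hD : ∀ (t : ℕ) (ω : Ω),
      (range (t + 1)).inf' ⟨0, by simp⟩
          (fun τ => (∑ i ∈ Ico 0 τ, a i ω) + ∑ i ∈ Ico τ t, s i ω) ≤ D t ω)
    (θ δb p q : ℝ) (hθ : 0 < θ) (hδb : 0 ≤ δb) (hp : 0 < p) (hq : 0 < q)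
    (hpq : p * q < 1) (t : ℕ)
    (hindep : ∀ u : ℕ, u ≤ t →
      IndepFun (fun ω => ∑ i ∈ Ico u t, a i ω) (fun ω => ∑ i ∈ Ico u t, s i ω) ℙ)
    (hAint : ∀ u : ℕ, u ≤ t →
      Integrable (fun ω => Real.exp (θ * ∑ i ∈ Ico u t, a i ω)) ℙ)
    (hA : ∀ u : ℕ, u ≤ t →
      ∫ ω : Ω, Real.exp (θ * ∑ i ∈ Ico u t, a i ω) ∂ℙ ≤ Real.exp (θ * δb) * p ^ (t - u))
    (hS : ∀ u : ℕ, u ≤ t →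
      ∫ ω : Ω, Real.exp (-θ * ∑ i ∈ Ico u t, s i ω) ∂ℙ ≤ q ^ (t - u))
    (ε : ℝ) (hε0 : 0 < ε) (hε1 : ε < 1) :
    (ℙ {ω : Ω |
        δb + (1 / θ) * (Real.log (1 / ε) - Real.log (1 - p * q)) <
          (∑ i ∈ Ico 0 t, a i ω) - D t ω}).toReal ≤ ε := by

  set b : ℝ := δb + (1 / θ) * (Real.log (1 / ε) - Real.log (1 - p * q)) with hb
  set r : ℝ := p * q with hrdef
  have hr0 : 0 < r := mul_pos hp hq
  have hr1 : r < 1 := hpq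
  have h1r : 0 < 1 - r := by linarith
  -- exp(θδb)/exp(θb) = ε (1-r)
  have hkey2 : Real.exp (θ * δb) / Real.exp (θ * b) = ε * (1 - r) := by
    rw [← Real.exp_sub]
    have hlog : θ * δb - θ * b = Real.log ε + Real.log (1 - r) := by
      have hL1 : Real.log (1 / ε) = - Real.log ε := by rw [one_div, Real.log_inv]
      rw [hb, hL1]
      field_simp
      ring
    rw [hlog, Real.exp_add, Real.exp_log hε0, Real.exp_log h1r]
  -- per-step Chernoff bound
  have key : ∀ τ : ℕ, τ ≤ t →
      (ℙ {ω : Ω | b < (∑ i ∈ Ico τ t, a i ω) - ∑ i ∈ Ico τ t, s i ω}).toReal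
        ≤ ε * (1 - r) * r ^ (t - τ) := by
    intro τ hτ
    set X : Ω → ℝ := fun ω => ∑ i ∈ Ico τ t, a i ω with hX
    set Y : Ω → ℝ := fun ω => ∑ i ∈ Ico τ t, s i ω with hY
    have hXm : Measurable X := Finset.measurable_sum _ (fun i _ => hameas i)
    have hYm : Measurable Y := Finset.measurable_sum _ (fun i _ => hsmeas i)
    have hind : IndepFun (fun ω => Real.exp (θ * X ω)) (fun ω => Real.exp (-θ * Y ω)) ℙ :=
      (hindep τ hτ).comp (Real.measurable_exp.comp (measurable_const_mul θ))
        (Real.measurable_exp.comp (measurable_const_mul (-θ)))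
    set f : Ω → ℝ := fun ω => Real.exp (θ * X ω) * Real.exp (-θ * Y ω) with hf
    have hXint : Integrable (fun ω => Real.exp (θ * X ω)) ℙ := hAint τ hτ
    have hYint : Integrable (fun ω => Real.exp (-θ * Y ω)) ℙ := by
      refine Integrable.mono' (integrable_const 1)
        ((Real.measurable_exp.comp (hYm.const_mul (-θ))).aestronglyMeasurable) ?_
      filter_upwards with ω
      rw [Real.norm_eq_abs, abs_of_nonneg (Real.exp_nonneg _)]
      have hYnn : 0 ≤ Y ω := Finset.sum_nonneg (fun i _ => hs i ω)
      have : -θ * Y ω ≤ 0 := mul_nonpos_of_nonpos_of_nonneg (by linarith) hYnn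
      calc Real.exp (-θ * Y ω) ≤ Real.exp 0 := Real.exp_le_exp.mpr this
        _ = 1 := Real.exp_zero
    have hfint : Integrable f ℙ := hind.integrable_mul hXint hYint
    have hfnn : (0 : Ω → ℝ) ≤ᵐ[ℙ] f := Filter.Eventually.of_forall (fun ω => by positivity)
    have hmark := mul_meas_ge_le_integral_of_nonneg hfnn hfint (Real.exp (θ * b))
    have hsub : {ω : Ω | b < X ω - Y ω} ⊆ {ω : Ω | Real.exp (θ * b) ≤ f ω} := by
      intro ω hω
      simp only [Set.mem_setOf_eq] at hω ⊢
      have hfval : f ω = Real.exp (θ * (X ω - Y ω)) := by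
        show Real.exp (θ * X ω) * Real.exp (-θ * Y ω) = _
        rw [← Real.exp_add]; ring_nf
      rw [hfval]
      exact Real.exp_le_exp.mpr (by nlinarith)
    have hmono : (ℙ {ω : Ω | b < X ω - Y ω}).toReal
        ≤ (ℙ {ω : Ω | Real.exp (θ * b) ≤ f ω}).toReal :=
      ENNReal.toReal_mono (measure_ne_top _ _) (measure_mono hsub)
    have hIf : ∫ ω, f ω ∂ℙ ≤ Real.exp (θ * δb) * r ^ (t - τ) := by
      have hint : ∫ ω, f ω ∂ℙ
          = (∫ ω, Real.exp (θ * X ω) ∂ℙ) * ∫ ω, Real.exp (-θ * Y ω) ∂ℙ :=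
        hind.integral_fun_mul_eq_mul_integral hXint.aestronglyMeasurable hYint.aestronglyMeasurable
      rw [hint]
      have h1 := hA τ hτ
      have h2 := hS τ hτ
      have i2nn : 0 ≤ ∫ ω, Real.exp (-θ * Y ω) ∂ℙ :=
        integral_nonneg (fun ω => Real.exp_nonneg _)
      calc (∫ ω, Real.exp (θ * X ω) ∂ℙ) * ∫ ω, Real.exp (-θ * Y ω) ∂ℙ
          ≤ (Real.exp (θ * δb) * p ^ (t - τ)) * q ^ (t - τ) :=
            mul_le_mul h1 h2 i2nn (by positivity)
        _ = Real.exp (θ * δb) * r ^ (t - τ) := by rw [hrdef, mul_pow]; ring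
    have hepos : (0 : ℝ) < Real.exp (θ * b) := Real.exp_pos _
    calc (ℙ {ω : Ω | b < X ω - Y ω}).toReal
        ≤ (∫ ω, f ω ∂ℙ) / Real.exp (θ * b) := by
          rw [le_div_iff₀ hepos]
          calc (ℙ {ω : Ω | b < X ω - Y ω}).toReal * Real.exp (θ * b)
              = Real.exp (θ * b) * (ℙ {ω : Ω | b < X ω - Y ω}).toReal := by ring
            _ ≤ Real.exp (θ * b) * (ℙ {ω : Ω | Real.exp (θ * b) ≤ f ω}).toReal :=
                mul_le_mul_of_nonneg_left hmono hepos.le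
            _ ≤ ∫ ω, f ω ∂ℙ := hmark
      _ ≤ (Real.exp (θ * δb) * r ^ (t - τ)) / Real.exp (θ * b) := by
          exact div_le_div_of_nonneg_right hIf hepos.le
      _ = (Real.exp (θ * δb) / Real.exp (θ * b)) * r ^ (t - τ) := by ring
      _ = ε * (1 - r) * r ^ (t - τ) := by rw [hkey2]
  -- union bound
  set E : ℕ → Set Ω := fun τ => {ω : Ω | b < (∑ i ∈ Ico τ t, a i ω) - ∑ i ∈ Ico τ t, s i ω}
    with hE
  have incl : {ω : Ω | b < (∑ i ∈ Ico 0 t, a i ω) - D t ω} ⊆ ⋃ τ ∈ range (t + 1), E τ := by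
    intro ω hω
    simp only [Set.mem_setOf_eq] at hω
    have hDω := hD t ω
    have hinf : (range (t + 1)).inf' ⟨0, by simp⟩
        (fun τ => (∑ i ∈ Ico 0 τ, a i ω) + ∑ i ∈ Ico τ t, s i ω)
        < (∑ i ∈ Ico 0 t, a i ω) - b := by linarith
    replace hinf := (Finset.inf'_lt_iff _).mp hinf
    obtain ⟨τ, hτmem, hτ⟩ := hinf
    have hτle : τ ≤ t := Nat.lt_succ_iff.mp (Finset.mem_range.mp hτmem)
    have hsplit : (∑ i ∈ Ico 0 τ, a i ω) + ∑ i ∈ Ico τ t, a i ω = ∑ i ∈ Ico 0 t, a i ω :=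
      Finset.sum_Ico_consecutive _ (Nat.zero_le τ) hτle
    refine Set.mem_biUnion hτmem ?_
    simp only [hE, Set.mem_setOf_eq]
    linarith
  have hne : (∑ τ ∈ range (t + 1), ℙ (E τ)) ≠ ⊤ := by
    refine (ENNReal.sum_lt_top.mpr fun τ _ => measure_lt_top _ _).ne
  calc (ℙ {ω : Ω | b < (∑ i ∈ Ico 0 t, a i ω) - D t ω}).toReal
      ≤ (∑ τ ∈ range (t + 1), ℙ (E τ)).toReal :=
        ENNReal.toReal_mono hne
          ((measure_mono incl).trans (measure_biUnion_finset_le _ _))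
    _ = ∑ τ ∈ range (t + 1), (ℙ (E τ)).toReal :=
        ENNReal.toReal_sum (fun τ _ => measure_ne_top _ _)
    _ ≤ ∑ τ ∈ range (t + 1), ε * (1 - r) * r ^ (t - τ) :=
        Finset.sum_le_sum (fun τ hτ => key τ (Nat.lt_succ_iff.mp (Finset.mem_range.mp hτ)))
    _ = ε * (1 - r) * ∑ τ ∈ range (t + 1), r ^ (t - τ) := by rw [Finset.mul_sum]
    _ = ε * (1 - r) * ∑ k ∈ range (t + 1), r ^ k := by
        congr 1
        have := Finset.sum_range_reflect (fun k => r ^ k) (t + 1)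
        simpa using this
    _ ≤ ε := by
        have hg : (1 - r) * ∑ k ∈ range (t + 1), r ^ k = 1 - r ^ (t + 1) := by
          linear_combination -(geom_sum_mul r (t + 1))
        have hrn : 0 ≤ r ^ (t + 1) := by positivity
        nlinarith [hg]
end

section
/- Let a_i and s_i, i ∈ ℕ, be nonnegative random variables on a probability space, define A(τ,t) = Σ_{i=τ}^{t−1} a_i and S(τ,t) = Σ_{i=τ}^{t−1} s_i, and let D(0,t), t ∈ ℕ, be nondecreasing in t and satisfy the dynamic-server property D(0,t′) ≥ min_{0≤τ≤t′} ( A(0,τ) + S(τ,t′) ) for all t′. Let θ > 0, δ_b ≥ 0, and p, q > 0 with p·q < 1; fix t, w ∈ ℕ and assume that for each 0 ≤ u ≤ t the random variables A(u,t) and S(u,t+w) are independent, that E[e^{θ·A(u,t)}] ≤ e^{θ·δ_b}·p^{t−u} for all 0 ≤ u ≤ t, and that E[e^{−θ·S(u,t+w)}] ≤ q^{t+w−u} for all 0 ≤ u ≤ t+w. Then the virtual delay W(t) = inf{ w′ ∈ ℕ : A(0,t) ≤ D(0,t+w′) } satisfies P( W(t) > w ) ≤ e^{θ·δ_b}·q^{w}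 / (1 − p·q). (This is the delay part of Theorem 2.) -/
open MeasureTheory ProbabilityTheory Finset

/-- delay part of Theorem 2 of the paper. For a dynamic server with
nondecreasing cumulative departures, cumulative arrivals `A(τ,t) = ∑_{i=τ}^{t-1} aᵢ` and
service `S(τ,t) = ∑_{i=τ}^{t-1} sᵢ`, independence of `A(u,t)` and `S(u,t+w)` for each
`u ≤ t`, envelopes `E[e^{θ A(u,t)}] ≤ e^{θ δ_b} p^{t-u}` (for `u ≤ t`) and
`E[e^{-θ S(u,t+w)}] ≤ q^{t+w-u}` (for `u ≤ t+w`), and stability `p·q < 1`, the virtual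
delay `W(t) = inf { w' : A(0,t) ≤ D(0,t+w') }` (valued in `ℕ∞`) satisfies
`P(W(t) > w) ≤ e^{θ δ_b} q^w / (1 - pq)`. -/
theorem delay_violation_probability_bound
    {Ω : Type*} [MeasureSpace Ω] [IsProbabilityMeasure (ℙ : Measure Ω)]
    (a s : ℕ → Ω → ℝ)
    (hameas : ∀ i, Measurable (a i)) (hsmeas : ∀ i, Measurable (s i))
    (ha : ∀ i ω, 0 ≤ a i ω) (hs : ∀ i ω, 0 ≤ s i ω)
    (D : ℕ → Ω → ℝ)
    (hDmono : ∀ (t t' : ℕ), t ≤ t' → ∀ ω : Ω, D t ω ≤ D t' ω)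
    (hD : ∀ (t' : ℕ) (ω : Ω),
      (range (t' + 1)).inf' ⟨0, by simp⟩
          (fun τ => (∑ i ∈ Ico 0 τ, a i ω) + ∑ i ∈ Ico τ t', s i ω) ≤ D t' ω)
    (W : ℕ → Ω → ℕ∞)
    (hW : ∀ (t : ℕ) (ω : Ω),
      W t ω = ⨅ (w' : ℕ) (_ : (∑ i ∈ Ico 0 t, a i ω) ≤ D (t + w') ω), (w' : ℕ∞))
    (θ δb p q : ℝ) (hθ : 0 < θ) (hδb : 0 ≤ δb) (hp : 0 < p) (hq : 0 < q)
    (hpq : p * q < 1) (t w : ℕ)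
    (hindep : ∀ u : ℕ, u ≤ t →
      IndepFun (fun ω => ∑ i ∈ Ico u t, a i ω) (fun ω => ∑ i ∈ Ico u (t + w), s i ω) ℙ)
    (hAint : ∀ u : ℕ, u ≤ t →
      Integrable (fun ω => Real.exp (θ * ∑ i ∈ Ico u t, a i ω)) ℙ)
    (hA : ∀ u : ℕ, u ≤ t →
      ∫ ω : Ω, Real.exp (θ * ∑ i ∈ Ico u t, a i ω) ∂ℙ ≤ Real.exp (θ * δb) * p ^ (t - u))
    (hS : ∀ u : ℕ, u ≤ t + w →
      ∫ ω : Ω, Real.exp (-θ * ∑ i ∈ Ico u (t + w), s i ω) ∂ℙ ≤ q ^ (t + w - u)) :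
    (ℙ {ω : Ω | (w : ℕ∞) < W t ω}).toReal ≤
      Real.exp (θ * δb) * q ^ w / (1 - p * q) := by
  have hpq0 : (0:ℝ) ≤ p * q := (mul_pos hp hq).le
  have h1pq : (0:ℝ) < 1 - p * q := by linarith
  set B : ℕ → Set Ω :=
    fun u => {ω | (∑ i ∈ Ico u (t + w), s i ω) < ∑ i ∈ Ico u t, a i ω} with hBdef
  -- Step 1: event inclusion
  have hsub : {ω : Ω | (w : ℕ∞) < W t ω} ⊆ ⋃ u ∈ range (t + 1), B u := by
    intro ω hω
    simp only [Set.mem_setOf_eq] at hω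
    have hDlt : D (t + w) ω < ∑ i ∈ Ico 0 t, a i ω := by
      by_contra hcon
      push_neg at hcon
      have hle : W t ω ≤ (w : ℕ∞) := by
        rw [hW]
        exact iInf_le_of_le w (iInf_le_of_le hcon le_rfl)
      exact absurd hω (not_lt.mpr hle)
    obtain ⟨τ, hτmem, hτeq⟩ := Finset.exists_mem_eq_inf'
      (⟨0, by simp⟩ : (range (t + w + 1)).Nonempty)
      (fun τ => (∑ i ∈ Ico 0 τ, a i ω) + ∑ i ∈ Ico τ (t + w), s i ω)
    have hlt : (∑ i ∈ Ico 0 τ, a i ω) + (∑ i ∈ Ico τ (t + w), s i ω)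
        < ∑ i ∈ Ico 0 t, a i ω := by
      have h1 := hD (t + w) ω
      rw [hτeq] at h1
      exact lt_of_le_of_lt h1 hDlt
    have hτt : τ < t := by
      by_contra hge
      push_neg at hge
      have h1 : (∑ i ∈ Ico 0 t, a i ω) ≤ ∑ i ∈ Ico 0 τ, a i ω :=
        Finset.sum_le_sum_of_subset_of_nonneg (Finset.Ico_subset_Ico le_rfl hge)
          (fun i _ _ => ha i ω)
      have h2 : (0:ℝ) ≤ ∑ i ∈ Ico τ (t + w), s i ω :=
        Finset.sum_nonneg fun i _ => hs i ω
      linarith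
    have hsplit : (∑ i ∈ Ico 0 τ, a i ω) + (∑ i ∈ Ico τ t, a i ω)
        = ∑ i ∈ Ico 0 t, a i ω :=
      Finset.sum_Ico_consecutive _ (Nat.zero_le τ) hτt.le
    have hmem : ω ∈ B τ := by
      simp only [hBdef, Set.mem_setOf_eq]
      linarith
    exact Set.mem_biUnion (Finset.mem_range.mpr (by omega : τ < t + 1)) hmem
  -- Step 2: Chernoff bound for each u
  have hbound : ∀ u ∈ range (t + 1),
      (ℙ (B u)).toReal ≤ Real.exp (θ * δb) * (p * q) ^ (t - u) * q ^ w := by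
    intro u hu
    have hut : u ≤ t := Nat.lt_succ_iff.mp (Finset.mem_range.mp hu)
    set fA : Ω → ℝ := fun ω => Real.exp (θ * ∑ i ∈ Ico u t, a i ω) with hfA
    set fS : Ω → ℝ := fun ω => Real.exp (-θ * ∑ i ∈ Ico u (t + w), s i ω) with hfS
    have hmeasA : Measurable fun ω => ∑ i ∈ Ico u t, a i ω :=
      Finset.measurable_sum _ fun i _ => hameas i
    have hmeasS : Measurable fun ω => ∑ i ∈ Ico u (t + w), s i ω :=
      Finset.measurable_sum _ fun i _ => hsmeas i
    have hfAmeas : Measurable fA := Real.measurable_exp.comp (hmeasA.const_mul θ)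
    have hfSmeas : Measurable fS := Real.measurable_exp.comp (hmeasS.const_mul (-θ))
    have hindep' : IndepFun fA fS ℙ :=
      (hindep u hut).comp (Real.measurable_exp.comp (measurable_id.const_mul θ))
        (Real.measurable_exp.comp (measurable_id.const_mul (-θ)))
    have hfSint : Integrable fS ℙ := by
      refine (integrable_const (1:ℝ)).mono' hfSmeas.aestronglyMeasurable ?_
      filter_upwards with ω
      rw [Real.norm_eq_abs, abs_of_pos (Real.exp_pos _)]
      have : -θ * ∑ i ∈ Ico u (t + w), s i ω ≤ 0 := by
        have := Finset.sum_nonneg fun i (_ : i ∈ Ico u (t + w)) => hs i ω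
        nlinarith
      exact Real.exp_le_one_iff.mpr this
    have hint : Integrable (fun ω => fA ω * fS ω) ℙ :=
      hindep'.integrable_mul (hAint u hut) hfSint
    have hsubset : B u ⊆ {x | (1:ℝ) ≤ fA x * fS x} := by
      intro ω hω
      simp only [hBdef, Set.mem_setOf_eq] at hω
      simp only [Set.mem_setOf_eq, hfA, hfS, ← Real.exp_add]
      apply Real.one_le_exp
      nlinarith
    have hmark := mul_meas_ge_le_integral_of_nonneg (μ := ℙ)
      (f := fun ω => fA ω * fS ω)
      (Filter.Eventually.of_forall fun ω =>
        mul_nonneg (Real.exp_pos _).le (Real.exp_pos _).le) hint 1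
    rw [one_mul] at hmark
    have h1 : (ℙ (B u)).toReal ≤ (ℙ {x | (1:ℝ) ≤ fA x * fS x}).toReal :=
      ENNReal.toReal_mono (measure_ne_top _ _) (measure_mono hsubset)
    have hEq : ∫ ω, fA ω * fS ω ∂ℙ = (∫ ω, fA ω ∂ℙ) * ∫ ω, fS ω ∂ℙ :=
      hindep'.integral_fun_mul_eq_mul_integral hfAmeas.aestronglyMeasurable hfSmeas.aestronglyMeasurable
    have hEA : ∫ ω, fA ω ∂ℙ ≤ Real.exp (θ * δb) * p ^ (t - u) := hA u hut
    have hES : ∫ ω, fS ω ∂ℙ ≤ q ^ (t + w - u) := hS u (by omega)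
    have hESnn : 0 ≤ ∫ ω, fS ω ∂ℙ :=
      integral_nonneg fun ω => (Real.exp_pos _).le
    have hprod : (∫ ω, fA ω ∂ℙ) * (∫ ω, fS ω ∂ℙ)
        ≤ (Real.exp (θ * δb) * p ^ (t - u)) * q ^ (t + w - u) :=
      mul_le_mul hEA hES hESnn (by positivity)
    have hexp : (Real.exp (θ * δb) * p ^ (t - u)) * q ^ (t + w - u)
        = Real.exp (θ * δb) * (p * q) ^ (t - u) * q ^ w := by
      have h3 : t + w - u = (t - u) + w := by omega
      rw [h3, pow_add, mul_pow]; ring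
    calc (ℙ (B u)).toReal ≤ (ℙ {x | (1:ℝ) ≤ fA x * fS x}).toReal := h1
      _ ≤ ∫ ω, fA ω * fS ω ∂ℙ := hmark
      _ = (∫ ω, fA ω ∂ℙ) * ∫ ω, fS ω ∂ℙ := hEq
      _ ≤ (Real.exp (θ * δb) * p ^ (t - u)) * q ^ (t + w - u) := hprod
      _ = _ := hexp
  -- Step 3: union bound and geometric series
  have hgeom : ∑ k ∈ range (t + 1), (p * q) ^ k ≤ 1 / (1 - p * q) := by
    rw [geom_sum_eq hpq.ne]
    have heq : ((p * q) ^ (t + 1) - 1) / (p * q - 1)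
        = (1 - (p * q) ^ (t + 1)) / (1 - p * q) := by
      rw [← neg_div_neg_eq]; ring_nf
    rw [heq]
    have hpn : (0:ℝ) ≤ (p * q) ^ (t + 1) := pow_nonneg hpq0 _
    exact (div_le_div_iff_of_pos_right h1pq).mpr (by linarith)
  have hsum2 : ∑ u ∈ range (t + 1), (p * q) ^ (t - u)
      = ∑ k ∈ range (t + 1), (p * q) ^ k := by
    rw [← Finset.sum_range_reflect (fun k => (p * q) ^ k) (t + 1)]
    exact Finset.sum_congr rfl fun u hu => by simp
  calc (ℙ {ω : Ω | (w : ℕ∞) < W t ω}).toReal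
      ≤ (ℙ (⋃ u ∈ range (t + 1), B u)).toReal :=
        ENNReal.toReal_mono (measure_ne_top _ _) (measure_mono hsub)
    _ ≤ (∑ u ∈ range (t + 1), ℙ (B u)).toReal :=
        ENNReal.toReal_mono (ENNReal.sum_ne_top.mpr fun u _ => measure_ne_top _ _)
          (measure_biUnion_finset_le _ _)
    _ = ∑ u ∈ range (t + 1), (ℙ (B u)).toReal :=
        ENNReal.toReal_sum fun u _ => measure_ne_top _ _
    _ ≤ ∑ u ∈ range (t + 1), Real.exp (θ * δb) * (p * q) ^ (t - u) * q ^ w :=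
        Finset.sum_le_sum hbound
    _ = Real.exp (θ * δb) * q ^ w * ∑ u ∈ range (t + 1), (p * q) ^ (t - u) := by
        rw [Finset.mul_sum]
        exact Finset.sum_congr rfl fun u _ => by ring
    _ ≤ Real.exp (θ * δb) * q ^ w * (1 / (1 - p * q)) := by
        rw [hsum2]
        exact mul_le_mul_of_nonneg_left hgeom (by positivity)
    _ = Real.exp (θ * δb) * q ^ w / (1 - p * q) := by
        rw [mul_one_div]
end
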